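/- Assume the flux A satisfies (A-1)–(A-4) and (B-1)–(B-3), u₀ ∈ BV(ℝ) with u₀ − u_M compactly supported, and assume the CFL condition λL ≤ 1/2. Then the Godunov approximations satisfy the discrete time-continuity estimate: for every n ≥ 0, Σ_{j∈ℤ} |u_j^{n+1} − u_j^n| ≤ 2λ(η̄·TV(a) + L·TV(u₀) + L·TV(u_M)), where η̄ := sup{η(u) : |u| ≤ ℳ}, L := sup{|∂_u A(x,u)| : |u| ≤ ℳ, x ∈ ℝ}, and ℳ := max(sup_x |k_ᾱ^−(x)|, sup_x |k_ᾱ^+(x)|). -/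

import Mathlib

open MeasureTheory Filter

private lemma absstep {e aa bb lam L : ℝ} (hlam : 0 ≤ lam) (hCFL : lam * L ≤ 1/2)
    (ha : |aa| ≤ L * |e|) (hb : |bb| ≤ L * |e|) (hae : 0 ≤ aa * e) (hbe : bb * e ≤ 0) :
    |e - lam * aa + lam * bb| ≤ |e| - lam * |aa| - lam * |bb| := by
  rcases eq_or_ne e 0 with rfl | he0
  · simp only [abs_zero, mul_zero] at ha hb
    have h1 : aa = 0 := abs_eq_zero.mp (le_antisymm ha (abs_nonneg _))
    have h2 : bb = 0 := abs_eq_zero.mp (le_antisymm hb (abs_nonneg _))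
    simp [h1, h2]
  · rcases lt_or_gt_of_ne he0 with he | he
    · have haa : aa ≤ 0 := by nlinarith
      have hbb : 0 ≤ bb := by nlinarith
      rw [abs_of_neg he] at ha hb ⊢
      rw [abs_of_nonpos haa] at ha ⊢
      rw [abs_of_nonneg hbb] at hb ⊢
      rw [abs_of_nonpos (by nlinarith)]
      ring_nf
      nlinarith
    · have haa : 0 ≤ aa := by nlinarith
      have hbb : bb ≤ 0 := by nlinarith
      rw [abs_of_pos he] at ha hb ⊢
      rw [abs_of_nonneg haa] at ha ⊢
      rw [abs_of_nonpos hbb] at hb ⊢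
      rw [abs_of_nonneg (by nlinarith)]
      ring_nf
      nlinarith

private lemma evar_le_add {f g h : ℝ → ℝ} {s : Set ℝ}
    (hpt : ∀ x y, |h x - h y| ≤ |f x - f y| + |g x - g y|) :
    eVariationOn h s ≤ eVariationOn f s + eVariationOn g s := by
  apply iSup_le
  rintro ⟨n, ⟨v, hv, vs⟩⟩
  calc ∑ i ∈ Finset.range n, edist (h (v (i+1))) (h (v i))
      ≤ ∑ i ∈ Finset.range n,
        (edist (f (v (i+1))) (f (v i)) + edist (g (v (i+1))) (g (v i))) := by
        refine Finset.sum_le_sum fun i _ => ?_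
        rw [edist_dist, edist_dist, edist_dist, Real.dist_eq, Real.dist_eq, Real.dist_eq,
          ← ENNReal.ofReal_add (abs_nonneg _) (abs_nonneg _)]
        exact ENNReal.ofReal_le_ofReal (hpt _ _)
    _ = _ + _ := Finset.sum_add_distrib
    _ ≤ _ := add_le_add (eVariationOn.sum_le (f := f) (n := n) hv vs) (eVariationOn.sum_le (f := g) (n := n) hv vs)

private lemma evar_sum_le (f : ℝ → ℝ) (hf : eVariationOn f Set.univ ≠ ⊤)
    (X : ℤ → ℝ) (hX : Monotone X) (s : Finset ℤ) :
    ∑ j ∈ s, |f (X j) - f (X (j-1))| ≤ (eVariationOn f Set.univ).toReal := by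
  rcases s.eq_empty_or_nonempty with rfl | hs
  · simp
  set m := s.min' hs with hm
  set M := s.max' hs with hMd
  have hsub : s ⊆ Finset.Icc m M := fun j hj => Finset.mem_Icc.mpr ⟨s.min'_le j hj, s.le_max' j hj⟩
  have h1 : ∑ j ∈ s, |f (X j) - f (X (j-1))| ≤ ∑ j ∈ Finset.Icc m M, |f (X j) - f (X (j-1))| :=
    Finset.sum_le_sum_of_subset_of_nonneg hsub (fun _ _ _ => abs_nonneg _)
  have hmM : m ≤ M := s.min'_le _ (s.max'_mem hs)
  set N : ℕ := (M - m).toNat + 1 with hN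
  have hNc : (N : ℤ) = M - m + 1 := by
    rw [hN]; push_cast [Int.toNat_of_nonneg (by omega : (0:ℤ) ≤ M - m)]; ring
  set useq : ℕ → ℝ := fun i => X (m - 1 + min (i : ℤ) (N : ℤ)) with hu
  have hmono : Monotone useq := by
    intro i j hij
    refine hX ?_
    have hc : (i:ℤ) ≤ (j:ℤ) := by exact_mod_cast hij
    omega
  have key : ∑ i ∈ Finset.range N, edist (f (useq (i+1))) (f (useq i)) ≤ eVariationOn f Set.univ :=
    eVariationOn.sum_le (f := f) (n := N) hmono (fun _ => Set.mem_univ _)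
  have himg : Finset.Icc m M = (Finset.range N).image (fun i : ℕ => m + (i : ℤ)) := by
    ext j
    simp only [Finset.mem_Icc, Finset.mem_image, Finset.mem_range]
    constructor
    · intro ⟨ha, hb⟩; exact ⟨(j - m).toNat, by omega, by omega⟩
    · rintro ⟨i, hi, rfl⟩; omega
  have h2 : ∑ j ∈ Finset.Icc m M, |f (X j) - f (X (j-1))|
      = ∑ i ∈ Finset.range N, (edist (f (useq (i+1))) (f (useq i))).toReal := by
    rw [himg, Finset.sum_image (by intro i _ j _ h; simp only at h; omega)]
    refine Finset.sum_congr rfl fun i hi => ?_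
    have hiN : (i:ℤ) < (N:ℤ) := by exact_mod_cast Finset.mem_range.mp hi
    have e1 : useq (i+1) = X (m + (i:ℤ)) := by
      rw [hu]; simp only []; congr 1; push_cast; omega
    have e2 : useq i = X (m + (i:ℤ) - 1) := by
      rw [hu]; simp only []; congr 1; omega
    rw [e1, e2, edist_dist, ENNReal.toReal_ofReal dist_nonneg, Real.dist_eq]
  have h3 : ∑ i ∈ Finset.range N, (edist (f (useq (i+1))) (f (useq i))).toReal
      = (∑ i ∈ Finset.range N, edist (f (useq (i+1))) (f (useq i))).toReal :=
    (ENNReal.toReal_sum (fun _ _ => edist_ne_top _ _)).symm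
  calc ∑ j ∈ s, |f (X j) - f (X (j-1))| ≤ _ := h1
    _ = _ := h2
    _ = _ := h3
    _ ≤ (eVariationOn f Set.univ).toReal := ENNReal.toReal_mono hf key
/-- The midpoint `u_M(x) = (u_M^-(x) + u_M^+(x))/2` of the flat region. -/
noncomputable def uMid (uMm uMp : ℝ → ℝ) (x : ℝ) : ℝ := (uMm x + uMp x) / 2

/-- The generalized Godunov numerical flux
`Ā(u,v,x,y) = max{A(x, max(u,u_M(x))), A(y, min(v,u_M(y)))}`. -/
noncomputable def Abar (A : ℝ → ℝ → ℝ) (w : ℝ → ℝ) (u v x y : ℝ) : ℝ :=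
  max (A x (max u (w x))) (A y (min v (w y)))

set_option maxHeartbeats 4000000 in
/-- (Lemma 3.8: discrete time-continuity estimate.) Under (A-1)–(A-4),
(B-1)–(B-3), `u₀ ∈ BV(ℝ)` with `u₀ - u_M` compactly supported, and the CFL condition,
`Σ_j |u_j^{n+1} - u_j^n| ≤ 2λ(η̄·TV(a) + L·TV(u₀) + L·TV(u_M))` for every `n`. -/
theorem godunov_time_continuity
    -- flux and its discontinuity set
    (A : ℝ → ℝ → ℝ) (Om : Set ℝ)
    -- (A-1)
    (hOm_closed : IsClosed Om) (hOm_null : volume Om = 0)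
    (hA1 : ContinuousOn (Function.uncurry A) (Omᶜ ×ˢ (Set.univ : Set ℝ)))
    -- (A-2)
    (q : ℝ → ℝ) (hq_locbdd : ∀ r : ℝ, ∃ C, ∀ s ∈ Set.Icc (-r) r, |q s| ≤ C)
    (hA2 : ∀ M : ℝ, 0 < M → ∀ᵐ x ∂(volume : Measure ℝ),
      ∀ u ∈ Set.Icc (-M) M, ∀ v ∈ Set.Icc (-M) M, |A x u - A x v| ≤ q M * |u - v|)
    -- (A-3)
    (uMm uMp : ℝ → ℝ)
    (huMm_cont : ContinuousOn uMm Omᶜ) (huMp_cont : ContinuousOn uMp Omᶜ)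
    (huM_le : ∀ x, uMm x ≤ uMp x)
    (hA3_dec : ∀ x, AntitoneOn (A x) (Set.Iic (uMm x)))
    (hA3_inc : ∀ x, MonotoneOn (A x) (Set.Ici (uMp x)))
    (hA3_zero : ∀ x, ∀ z ∈ Set.Icc (uMm x) (uMp x), A x z = 0)
    -- (A-4)
    (γ : ℝ → ℝ) (hγ_cont : ContinuousOn γ (Set.Ici 0))
    (hγ_mono : StrictMonoOn γ (Set.Ici 0)) (hγ_zero : γ 0 = 0)
    (hγ_top : Tendsto γ atTop atTop)
    (hA4p : ∀ x u, uMp x ≤ u → γ (u - uMp x) ≤ A x u)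
    (hA4m : ∀ x u, u ≤ uMm x → γ (uMm x - u) ≤ A x u)
    -- (B-1): x ↦ A(x,u) is piecewise constant, with discontinuities contained in Om
    (hB1 : ∀ u : ℝ, ∀ x y : ℝ, Set.uIcc x y ⊆ Omᶜ → A x u = A y u)
    -- (B-2)
    (η : ℝ → ℝ) (hη_cont : Continuous η)
    (a : ℝ → ℝ) (ha_BV : BoundedVariationOn a Set.univ)
    (hB2 : ∀ x y u, |A x u - A y u| ≤ η u * |a x - a y|)
    -- (B-3)
    (hB3m : BoundedVariationOn uMm Set.univ) (hB3p : BoundedVariationOn uMp Set.univ)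
    -- initial data: u₀ ∈ BV(ℝ), u₀ - u_M compactly supported
    (u₀ : ℝ → ℝ) (hu₀_BV : BoundedVariationOn u₀ Set.univ)
    (hu₀_supp : HasCompactSupport (fun x => u₀ x - uMid uMm uMp x))
    -- ᾱ := sup_x A(x, u₀(x))
    (abar : ℝ) (habar : IsLUB (Set.range fun x => A x (u₀ x)) abar)
    -- the stationary states k_ᾱ^±
    (km kp : ℝ → ℝ)
    (hkm : ∀ x, A x (km x) = abar ∧ km x ≤ uMm x)
    (hkp : ∀ x, A x (kp x) = abar ∧ uMp x ≤ kp x)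
    -- ℳ bounds sup_x |k_ᾱ^-(x)| and sup_x |k_ᾱ^+(x)|
    (ℳ : ℝ) (hℳm : ∀ x, |km x| ≤ ℳ) (hℳp : ∀ x, |kp x| ≤ ℳ)
    -- L : Lipschitz constant of u ↦ A(x,u) on [-ℳ,ℳ]
    (L : ℝ) (hL : ∀ x u v : ℝ, |u| ≤ ℳ → |v| ≤ ℳ → |A x u - A x v| ≤ L * |u - v|)
    -- η̄ = sup{η(u) : |u| ≤ ℳ}
    (etabar : ℝ) (hetabar : ∀ w : ℝ, |w| ≤ ℳ → η w ≤ etabar)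
    -- the Godunov scheme on the grid x_j = jΔx, t^n = nΔt, λ = Δt/Δx
    (Dx Dt lam : ℝ) (hDx : 0 < Dx) (hDt : 0 < Dt) (hlam : lam = Dt / Dx)
    (u : ℕ → ℤ → ℝ)
    (h0 : ∀ j : ℤ, u 0 j = u₀ ((j : ℝ) * Dx))
    (hstep : ∀ (n : ℕ) (j : ℤ), u (n+1) j = u n j
      - lam * (Abar A (uMid uMm uMp) (u n j) (u n (j+1)) ((j : ℝ) * Dx) (((j+1 : ℤ) : ℝ) * Dx)
             - Abar A (uMid uMm uMp) (u n (j-1)) (u n j) (((j-1 : ℤ) : ℝ) * Dx) ((j : ℝ) * Dx)))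
    -- the CFL condition
    (hCFL : lam * L ≤ 1/2) :
    ∀ n : ℕ, ∀ s : Finset ℤ,
      ∑ j ∈ s, |u (n+1) j - u n j| ≤
        2 * lam * (etabar * (eVariationOn a Set.univ).toReal
          + L * (eVariationOn u₀ Set.univ).toReal
          + L * (eVariationOn (uMid uMm uMp) Set.univ).toReal) := by
  have hlam0 : 0 < lam := by rw [hlam]; positivity
  set W : ℝ → ℝ := uMid uMm uMp with hWdef
  set X : ℤ → ℝ := fun j : ℤ => (j:ℝ) * Dx with hXdef
  have hXmono : Monotone X := by
    intro i j hij
    have : (i:ℝ) ≤ (j:ℝ) := by exact_mod_cast hij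
    exact mul_le_mul_of_nonneg_right this hDx.le
  have hstep' : ∀ (n : ℕ) (j : ℤ), u (n+1) j = u n j
      - lam * (Abar A W (u n j) (u n (j+1)) (X j) (X (j+1))
             - Abar A W (u n (j-1)) (u n j) (X (j-1)) (X j)) := fun n j => hstep n j
  -- ordering chain
  have hch : ∀ x, -ℳ ≤ km x ∧ km x ≤ uMm x ∧ uMm x ≤ W x ∧ W x ≤ uMp x ∧ uMp x ≤ kp x
      ∧ kp x ≤ ℳ := by
    intro x
    have h1 := abs_le.mp (hℳm x); have h2 := abs_le.mp (hℳp x)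
    have h3 := huM_le x
    refine ⟨h1.1, (hkm x).2, ?_, ?_, (hkp x).2, h2.2⟩
    · show uMm x ≤ (uMm x + uMp x)/2; linarith
    · show (uMm x + uMp x)/2 ≤ uMp x; linarith
  have hM0 : 0 ≤ ℳ := le_trans (abs_nonneg _) (hℳm 0)
  -- γ nonneg
  have hγnn : ∀ t, 0 ≤ t → 0 ≤ γ t := by
    intro t ht
    rcases eq_or_lt_of_le ht with rfl | ht'
    · exact hγ_zero.ge
    · have := hγ_mono (Set.mem_Ici.mpr le_rfl) (Set.mem_Ici.mpr ht) ht'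
      linarith [hγ_zero]
  have hA0 : ∀ x z, 0 ≤ A x z := by
    intro x z
    rcases le_or_gt z (uMm x) with h | h
    · exact le_trans (hγnn _ (by linarith)) (hA4m x z h)
    rcases le_or_gt (uMp x) z with h2 | h2
    · exact le_trans (hγnn _ (by linarith)) (hA4p x z h2)
    · rw [hA3_zero x z ⟨h.le, h2.le⟩]
  have habar0 : 0 ≤ abar := (hkp 0).1 ▸ hA0 0 (kp 0)
  have hub : ∀ x, A x (u₀ x) ≤ abar := fun x => habar.1 ⟨x, rfl⟩
  have hAW : ∀ x, A x (W x) = 0 := fun x => hA3_zero x (W x) ⟨(hch x).2.2.1, (hch x).2.2.2.1⟩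
  -- monotone on [W x, ∞), antitone on (-∞, W x]
  have hgm : ∀ x (s t : ℝ), W x ≤ s → s ≤ t → A x s ≤ A x t := by
    intro x s t hWs hst
    rcases le_or_gt (uMp x) s with h | h
    · exact hA3_inc x (Set.mem_Ici.mpr h) (Set.mem_Ici.mpr (le_trans h hst)) hst
    · rw [hA3_zero x s ⟨le_trans (hch x).2.2.1 hWs, h.le⟩]; exact hA0 x t
  have hha : ∀ x (s t : ℝ), t ≤ W x → s ≤ t → A x t ≤ A x s := by
    intro x s t hWt hst
    rcases le_or_gt t (uMm x) with h | h
    · exact hA3_dec x (Set.mem_Iic.mpr (le_trans hst h)) (Set.mem_Iic.mpr h) hst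
    · rw [hA3_zero x t ⟨h.le, le_trans hWt (hch x).2.2.2.1⟩]; exact hA0 x s
  -- flat regions
  have hflatp : ∀ x z, kp x ≤ z → A x z ≤ abar → A x z = abar := by
    intro x z h1 h2
    refine le_antisymm h2 ?_
    rw [← (hkp x).1]
    exact hgm x (kp x) z (le_trans (hch x).2.2.2.1 (hch x).2.2.2.2.1) h1
  have hflatm : ∀ x z, z ≤ km x → A x z ≤ abar → A x z = abar := by
    intro x z h1 h2
    refine le_antisymm h2 ?_
    rw [← (hkm x).1]
    exact hha x z (km x) (le_trans (hch x).2.1 (hch x).2.2.1) h1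
  -- admissibility of truncations
  have hmaxadm : ∀ x z, A x z ≤ abar → A x (max z (W x)) ≤ abar := by
    intro x z h
    rcases max_choice z (W x) with h1 | h1 <;> rw [h1]
    · exact h
    · rw [hAW x]; exact habar0
  have hminadm : ∀ x z, A x z ≤ abar → A x (min z (W x)) ≤ abar := by
    intro x z h
    rcases min_choice z (W x) with h1 | h1 <;> rw [h1]
    · exact h
    · rw [hAW x]; exact habar0
  -- order-convexity of the sublevel set
  have hIconv : ∀ x z lb ub, lb ≤ z → z ≤ ub → A x lb ≤ abar → A x ub ≤ abar → A x z ≤ abar := by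
    intro x z lb ub h1 h2 h3 h4
    rcases le_or_gt z (uMm x) with h | h
    · exact le_trans (hA3_dec x (Set.mem_Iic.mpr (le_trans h1 h)) (Set.mem_Iic.mpr h) h1) h3
    rcases le_or_gt (uMp x) z with h' | h'
    · exact le_trans (hA3_inc x (Set.mem_Ici.mpr h') (Set.mem_Ici.mpr (le_trans h' h2)) h2) h4
    · rw [hA3_zero x z ⟨h.le, h'.le⟩]; exact habar0
  -- Abar bounds
  have hAbarB : ∀ x y p r, A x p ≤ abar → A y r ≤ abar →
      0 ≤ Abar A W p r x y ∧ Abar A W p r x y ≤ abar := by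
    intro x y p r h1 h2
    constructor
    · exact le_trans (hA0 x _) (le_max_left _ _)
    · exact max_le (hmaxadm x p h1) (hminadm y r h2)
  -- main case split on ℳ
  by_cases hMpos : 0 < ℳ
  · -- nondegenerate case
    have hL0 : 0 ≤ L := by
      have h1 := hL 0 ℳ (-ℳ) (by rw [abs_of_nonneg hM0]) (by rw [abs_neg, abs_of_nonneg hM0])
      have h2 : |ℳ - -ℳ| = 2*ℳ := by rw [abs_of_nonneg (by linarith)]; ring
      rw [h2] at h1
      nlinarith [abs_nonneg (A 0 ℳ - A 0 (-ℳ))]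
    have habarL : ∀ x, abar ≤ L * (kp x - km x) := by
      intro x
      have hc := hch x
      have h1 : |A x (kp x) - A x (uMp x)| ≤ L * |kp x - uMp x| :=
        hL x _ _ (hℳp x) (abs_le.mpr ⟨by linarith [hc.1, hc.2.1, hc.2.2.1, hc.2.2.2.1], by linarith [hc.2.2.2.2.1, hc.2.2.2.2.2]⟩)
      rw [(hkp x).1, hA3_zero x (uMp x) ⟨huM_le x, le_rfl⟩] at h1
      have h2 : |kp x - uMp x| = kp x - uMp x := abs_of_nonneg (by linarith [hc.2.2.2.2.1])
      rw [h2] at h1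
      have h3 := le_abs_self (abar - 0)
      have h4 : L * (kp x - uMp x) ≤ L * (kp x - km x) :=
        mul_le_mul_of_nonneg_left (by linarith [hc.2.1, hc.2.2.1, hc.2.2.2.1]) hL0
      simp only [sub_zero] at h3 h1
      linarith
    -- key Lipschitz-type estimate, max-side
    have gdiff1 : ∀ x y p r D, A x p ≤ abar → W x ≤ p → A y r ≤ abar → W y ≤ r →
        |p - r| ≤ D → |W x - W y| ≤ D →
        A x p - A y r ≤ etabar * |a x - a y| + L * D := by
      intro x y p r D hpI hpW hrI hrW hD1 hD2
      have hD0 : 0 ≤ D := le_trans (abs_nonneg _) hD1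
      have hΔ0 : 0 ≤ |a x - a y| := abs_nonneg _
      have hcx := hch x; have hcy := hch y
      set p' := min p (kp x) with hp'
      have hp'W : W x ≤ p' := le_min hpW (le_trans hcx.2.2.2.1 hcx.2.2.2.2.1)
      have hp'M : |p'| ≤ ℳ := by
        rw [abs_le]
        constructor
        · exact le_trans (by linarith [hcx.1, hcx.2.1, hcx.2.2.1]) hp'W
        · exact le_trans (min_le_right _ _) hcx.2.2.2.2.2
      have hAeq : A x p = A x p' := by
        rcases le_total p (kp x) with h | h
        · rw [hp', min_eq_left h]
        · rw [hp', min_eq_right h, hflatp x p h hpI, (hkp x).1]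
      have hetap : η p' ≤ etabar := hetabar _ hp'M
      have hBxy : |A x p' - A y p'| ≤ η p' * |a x - a y| := hB2 x y p'
      have hEΔ : η p' * |a x - a y| ≤ etabar * |a x - a y| := mul_le_mul_of_nonneg_right hetap hΔ0
      rcases le_or_gt (W y) p' with hc | hc
      · -- Case A
        have hmin : A y (min r p') ≤ A y r := hgm y (min r p') r (le_min hrW hc) (min_le_left _ _)
        have hminM : |min r p'| ≤ ℳ := by
          rw [abs_le]
          constructor
          · exact le_min (le_trans (by linarith [hcy.1, hcy.2.1, hcy.2.2.1]) hrW) (abs_le.mp hp'M).1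
          · exact le_trans (min_le_right _ _) (abs_le.mp hp'M).2
        have hLip : |A y p' - A y (min r p')| ≤ L * |p' - min r p'| := hL y _ _ hp'M hminM
        have habs2 : |p' - min r p'| ≤ D := by
          rw [abs_of_nonneg (by simp [min_le_right])]
          rcases le_total r p' with h | h
          · rw [min_eq_left h]
            have hpp : p' ≤ p := min_le_left _ _
            calc p' - r ≤ p - r := by linarith
              _ ≤ |p - r| := le_abs_self _
              _ ≤ D := hD1
          · rw [min_eq_right h]; simpa using hD0
        have h5 : L * |p' - min r p'| ≤ L * D := mul_le_mul_of_nonneg_left habs2 hL0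
        have h6 := le_abs_self (A x p' - A y p')
        have h7 := le_abs_self (A y p' - A y (min r p'))
        rw [hAeq]; linarith
      · -- Case B
        have hWyM : |W y| ≤ ℳ := by
          rw [abs_le]
          exact ⟨by linarith [hcy.1, hcy.2.1, hcy.2.2.1],
            by linarith [hcy.2.2.2.1, hcy.2.2.2.2.1, hcy.2.2.2.2.2]⟩
        have h6 : |A y p' - A y (W y)| ≤ L * |p' - W y| := hL y _ _ hp'M hWyM
        rw [hAW y, sub_zero] at h6
        have h7 : |p' - W y| ≤ D := by
          rw [abs_of_nonpos (by linarith)]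
          have h8 : W y - W x ≤ |W x - W y| := by
            rw [abs_sub_comm]; exact le_abs_self _
          linarith [hp'W]
        have h9 : A y p' ≤ L * |p' - W y| := le_trans (le_abs_self _) h6
        have h10 : 0 ≤ A y r := hA0 y r
        have h11 := le_abs_self (A x p' - A y p')
        have h12 : L * |p' - W y| ≤ L * D := mul_le_mul_of_nonneg_left h7 hL0
        rw [hAeq]; linarith
    have gdiff : ∀ x y p r D, A x p ≤ abar → W x ≤ p → A y r ≤ abar → W y ≤ r →
        |p - r| ≤ D → |W x - W y| ≤ D →
        |A x p - A y r| ≤ etabar * |a x - a y| + L * D := by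
      intro x y p r D h1 h2 h3 h4 h5 h6
      rw [abs_sub_le_iff]
      refine ⟨gdiff1 x y p r D h1 h2 h3 h4 h5 h6, ?_⟩
      have := gdiff1 y x r p D h3 h4 h1 h2 (by rwa [abs_sub_comm]) (by rwa [abs_sub_comm])
      rwa [abs_sub_comm (a y) (a x)] at this
    -- key Lipschitz-type estimate, min-side
    have hdiff1 : ∀ x y p r D, A x p ≤ abar → p ≤ W x → A y r ≤ abar → r ≤ W y →
        |p - r| ≤ D → |W x - W y| ≤ D →
        A x p - A y r ≤ etabar * |a x - a y| + L * D := by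
      intro x y p r D hpI hpW hrI hrW hD1 hD2
      have hD0 : 0 ≤ D := le_trans (abs_nonneg _) hD1
      have hΔ0 : 0 ≤ |a x - a y| := abs_nonneg _
      have hcx := hch x; have hcy := hch y
      set p' := max p (km x) with hp'
      have hp'W : p' ≤ W x := max_le hpW (le_trans hcx.2.1 hcx.2.2.1)
      have hp'M : |p'| ≤ ℳ := by
        rw [abs_le]
        constructor
        · exact le_trans hcx.1 (le_max_right _ _)
        · exact le_trans hp'W (by linarith [hcx.2.2.2.1, hcx.2.2.2.2.1, hcx.2.2.2.2.2])
      have hAeq : A x p = A x p' := by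
        rcases le_total (km x) p with h | h
        · rw [hp', max_eq_left h]
        · rw [hp', max_eq_right h, hflatm x p h hpI, (hkm x).1]
      have hetap : η p' ≤ etabar := hetabar _ hp'M
      have hBxy : |A x p' - A y p'| ≤ η p' * |a x - a y| := hB2 x y p'
      have hEΔ : η p' * |a x - a y| ≤ etabar * |a x - a y| := mul_le_mul_of_nonneg_right hetap hΔ0
      rcases le_or_gt p' (W y) with hc | hc
      · -- Case A
        have hmax : A y (max r p') ≤ A y r := hha y r (max r p') (max_le hrW hc) (le_max_left _ _)
        have hmaxM : |max r p'| ≤ ℳ := by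
          rw [abs_le]
          constructor
          · exact le_trans (abs_le.mp hp'M).1 (le_max_right _ _)
          · exact max_le (le_trans hrW (by linarith [hcy.2.2.1, hcy.2.1, hcy.2.2.2.1, hcy.2.2.2.2.1, hcy.2.2.2.2.2])) (abs_le.mp hp'M).2
        have hLip : |A y p' - A y (max r p')| ≤ L * |p' - max r p'| := hL y _ _ hp'M hmaxM
        have habs2 : |p' - max r p'| ≤ D := by
          rw [abs_of_nonpos (by simp [le_max_right])]
          rcases le_total p' r with h | h
          · rw [max_eq_left h]
            have hpp : p ≤ p' := le_max_left _ _
            have h13 : r - p ≤ |p - r| := by rw [abs_sub_comm]; exact le_abs_self _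
            linarith
          · rw [max_eq_right h]; simpa using hD0
        have h5 : L * |p' - max r p'| ≤ L * D := mul_le_mul_of_nonneg_left habs2 hL0
        have h6 := le_abs_self (A x p' - A y p')
        have h7 := le_abs_self (A y p' - A y (max r p'))
        rw [hAeq]; linarith
      · -- Case B
        have hWyM : |W y| ≤ ℳ := by
          rw [abs_le]
          exact ⟨by linarith [hcy.1, hcy.2.1, hcy.2.2.1],
            by linarith [hcy.2.2.2.1, hcy.2.2.2.2.1, hcy.2.2.2.2.2]⟩
        have h6 : |A y p' - A y (W y)| ≤ L * |p' - W y| := hL y _ _ hp'M hWyM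
        rw [hAW y, sub_zero] at h6
        have h7 : |p' - W y| ≤ D := by
          rw [abs_of_nonneg (by linarith)]
          have h8 : W x - W y ≤ |W x - W y| := le_abs_self _
          linarith [hp'W]
        have h9 : A y p' ≤ L * |p' - W y| := le_trans (le_abs_self _) h6
        have h10 : 0 ≤ A y r := hA0 y r
        have h11 := le_abs_self (A x p' - A y p')
        have h12 : L * |p' - W y| ≤ L * D := mul_le_mul_of_nonneg_left h7 hL0
        rw [hAeq]; linarith
    have hdiff : ∀ x y p r D, A x p ≤ abar → p ≤ W x → A y r ≤ abar → r ≤ W y →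
        |p - r| ≤ D → |W x - W y| ≤ D →
        |A x p - A y r| ≤ etabar * |a x - a y| + L * D := by
      intro x y p r D h1 h2 h3 h4 h5 h6
      rw [abs_sub_le_iff]
      refine ⟨hdiff1 x y p r D h1 h2 h3 h4 h5 h6, ?_⟩
      have := hdiff1 y x r p D h3 h4 h1 h2 (by rwa [abs_sub_comm]) (by rwa [abs_sub_comm])
      rwa [abs_sub_comm (a y) (a x)] at this
    -- invariant: scheme values stay in the sublevel set {A x · ≤ abar}
    have hPn : ∀ n j, A (X j) (u n j) ≤ abar := by
      intro n
      induction n with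
      | zero => intro j; rw [h0 j]; exact hub _
      | succ n ih =>
        intro j
        have hcx := hch (X j)
        have hAp1 : A (X j) (max (u n j) (W (X j)))
            ≤ Abar A W (u n j) (u n (j+1)) (X j) (X (j+1)) := le_max_left _ _
        have hAp2 : Abar A W (u n j) (u n (j+1)) (X j) (X (j+1)) ≤ abar :=
          (hAbarB _ _ _ _ (ih j) (ih (j+1))).2
        have hAm1 : A (X j) (min (u n j) (W (X j)))
            ≤ Abar A W (u n (j-1)) (u n j) (X (j-1)) (X j) := le_max_right _ _
        have hAm2 : Abar A W (u n (j-1)) (u n j) (X (j-1)) (X j) ≤ abar :=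
          (hAbarB _ _ _ _ (ih (j-1)) (ih j)).2
        have hup : u (n+1) j ≤ u n j + lam * (abar - A (X j) (max (u n j) (W (X j)))) := by
          have h1 : A (X j) (max (u n j) (W (X j))) - abar
              ≤ Abar A W (u n j) (u n (j+1)) (X j) (X (j+1))
                - Abar A W (u n (j-1)) (u n j) (X (j-1)) (X j) := sub_le_sub hAp1 hAm2
          have h2 := mul_le_mul_of_nonneg_left h1 hlam0.le
          rw [hstep' n j]; linarith
        have hlo : u n j - lam * (abar - A (X j) (min (u n j) (W (X j)))) ≤ u (n+1) j := by
          have h1 : Abar A W (u n j) (u n (j+1)) (X j) (X (j+1))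
                - Abar A W (u n (j-1)) (u n j) (X (j-1)) (X j)
              ≤ abar - A (X j) (min (u n j) (W (X j))) := sub_le_sub hAp2 hAm1
          have h2 := mul_le_mul_of_nonneg_left h1 hlam0.le
          rw [hstep' n j]; linarith
        have hkk : (0:ℝ) ≤ kp (X j) - km (X j) := by
          linarith [hcx.2.1, hcx.2.2.1, hcx.2.2.2.1, hcx.2.2.2.2.1]
        have hp1 := mul_le_mul_of_nonneg_left (habarL (X j)) hlam0.le
        have hp2 := mul_le_mul_of_nonneg_right hCFL hkk
        rcases le_or_gt (u n j) (km (X j)) with hc1 | hc1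
        · -- below km
          have hgeq : A (X j) (max (u n j) (W (X j))) = 0 := by
            rw [max_eq_right (le_trans hc1 (le_trans hcx.2.1 hcx.2.2.1))]
            exact hAW _
          have hheq : A (X j) (min (u n j) (W (X j))) = abar := by
            rw [min_eq_left (le_trans hc1 (le_trans hcx.2.1 hcx.2.2.1))]
            exact hflatm _ _ hc1 (ih j)
          refine hIconv (X j) _ (u n j) (kp (X j)) ?_ ?_ (ih j) (hkp (X j)).1.le
          · rw [hheq] at hlo; simpa using hlo
          · rw [hgeq] at hup
            have h10 : lam * (L * (kp (X j) - km (X j))) = lam * L * (kp (X j) - km (X j)) := by ring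
            linarith only [hup, hc1, hp1, hp2, h10, hkk, hlam0]
        rcases le_or_gt (u n j) (kp (X j)) with hc2 | hc2
        · -- middle zone
          have hWkp : W (X j) ≤ kp (X j) := le_trans hcx.2.2.2.1 hcx.2.2.2.2.1
          have hkmW : km (X j) ≤ W (X j) := le_trans hcx.2.1 hcx.2.2.1
          have hgkp : A (X j) (max (kp (X j)) (W (X j))) = abar := by
            rw [max_eq_left hWkp]; exact (hkp (X j)).1
          have hhkm : A (X j) (min (km (X j)) (W (X j))) = abar := by
            rw [min_eq_left hkmW]; exact (hkm (X j)).1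
          have hLip1 : |A (X j) (max (u n j) (W (X j))) - A (X j) (max (kp (X j)) (W (X j)))| ≤
              etabar * |a (X j) - a (X j)| + L * |u n j - kp (X j)| :=
            gdiff (X j) (X j) _ _ _ (hmaxadm _ _ (ih j)) (le_max_right _ _)
              (hmaxadm _ _ (hkp (X j)).1.le) (le_max_right _ _)
              (abs_max_sub_max_le_abs _ _ _)
              (by rw [sub_self, abs_zero]; exact abs_nonneg _)
          have hLip2 : |A (X j) (min (u n j) (W (X j))) - A (X j) (min (km (X j)) (W (X j)))| ≤
              etabar * |a (X j) - a (X j)| + L * |u n j - km (X j)| :=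
            hdiff (X j) (X j) _ _ _ (hminadm _ _ (ih j)) (min_le_right _ _)
              (hminadm _ _ (hkm (X j)).1.le) (min_le_right _ _)
              ((abs_min_sub_min_le_max _ _ _ _).trans
                (by rw [sub_self, abs_zero]; exact max_le le_rfl (abs_nonneg _)))
              (by rw [sub_self, abs_zero]; exact abs_nonneg _)
          rw [hgkp, sub_self, abs_zero, mul_zero, zero_add] at hLip1
          rw [hhkm, sub_self, abs_zero, mul_zero, zero_add] at hLip2
          have hd1 : |u n j - kp (X j)| = kp (X j) - u n j := by
            rw [abs_sub_comm]; exact abs_of_nonneg (by linarith)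
          have hd2 : |u n j - km (X j)| = u n j - km (X j) := abs_of_nonneg (by linarith)
          rw [hd1] at hLip1; rw [hd2] at hLip2
          refine hIconv (X j) _ (km (X j)) (kp (X j)) ?_ ?_ (hkm (X j)).1.le (hkp (X j)).1.le
          · have h5 : abar - A (X j) (min (u n j) (W (X j))) ≤ L * (u n j - km (X j)) := by
              have h6 := (abs_le.mp hLip2).1; linarith
            have h7 := mul_le_mul_of_nonneg_left h5 hlam0.le
            have h8 : (0:ℝ) ≤ u n j - km (X j) := by linarith
            have h9 := mul_le_mul_of_nonneg_right hCFL h8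
            have h10 : lam * (L * (u n j - km (X j))) = lam * L * (u n j - km (X j)) := by ring
            linarith only [hlo, h7, h9, h10, h8]
          · have h5 : abar - A (X j) (max (u n j) (W (X j))) ≤ L * (kp (X j) - u n j) := by
              have h6 := (abs_le.mp hLip1).1; linarith
            have h7 := mul_le_mul_of_nonneg_left h5 hlam0.le
            have h8 : (0:ℝ) ≤ kp (X j) - u n j := by linarith
            have h9 := mul_le_mul_of_nonneg_right hCFL h8
            have h10 : lam * (L * (kp (X j) - u n j)) = lam * L * (kp (X j) - u n j) := by ring
            linarith only [hup, h7, h9, h10, h8]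
        · -- above kp
          have hWu : W (X j) ≤ u n j := le_trans (le_trans hcx.2.2.2.1 hcx.2.2.2.2.1) hc2.le
          have hgeq : A (X j) (max (u n j) (W (X j))) = abar := by
            rw [max_eq_left hWu]; exact hflatp _ _ hc2.le (ih j)
          have hheq : A (X j) (min (u n j) (W (X j))) = 0 := by
            rw [min_eq_right hWu]; exact hAW _
          refine hIconv (X j) _ (km (X j)) (u n j) ?_ ?_ (hkm (X j)).1.le (ih j)
          · rw [hheq] at hlo
            have h10 : lam * (L * (kp (X j) - km (X j))) = lam * L * (kp (X j) - km (X j)) := by ring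
            linarith only [hlo, hc2, hp1, hp2, h10, hkk, hlam0]
          · rw [hgeq] at hup; simpa using hup
    -- nonnegativity of etabar * |Δa| terms
    have hEta : ∀ x y : ℝ, 0 ≤ etabar * |a x - a y| := by
      intro x y
      rcases le_or_gt 0 etabar with h | h
      · positivity
      · have hη0 : η 0 ≤ etabar := hetabar 0 (by simpa using hM0)
        have h2 : (0:ℝ) ≤ η 0 * |a x - a y| := le_trans (abs_nonneg _) (hB2 x y 0)
        nlinarith [abs_nonneg (a x - a y)]
    have haconst : etabar < 0 → ∀ x y : ℝ, a x = a y := by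
      intro h x y
      have hη0 : η 0 ≤ etabar := hetabar 0 (by simpa using hM0)
      have h2 : (0:ℝ) ≤ η 0 * |a x - a y| := le_trans (abs_nonneg _) (hB2 x y 0)
      by_contra hne
      have h3 : 0 < |a x - a y| := abs_pos.mpr (sub_ne_zero.mpr hne)
      nlinarith
    have hTVa_bdd : ∀ s : Finset ℤ, ∑ j ∈ s, etabar * |a (X j) - a (X (j-1))|
        ≤ etabar * (eVariationOn a Set.univ).toReal := by
      intro s
      rcases le_or_gt 0 etabar with h | h
      · rw [← Finset.mul_sum]
        exact mul_le_mul_of_nonneg_left (evar_sum_le a ha_BV X hXmono s) h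
      · have hc := haconst h
        have h1 : ∀ j ∈ s, etabar * |a (X j) - a (X (j-1))| = 0 := by
          intro j _; rw [hc (X j) (X (j-1))]; simp
        rw [Finset.sum_eq_zero h1]
        have h2 : eVariationOn a Set.univ = 0 :=
          eVariationOn.constant_on (by rintro _ ⟨x, _, rfl⟩ _ ⟨y, _, rfl⟩; exact hc x y)
        rw [h2]; simp
    -- shift identities
    have hshift : ∀ (f : ℝ → ℝ) (s : Finset ℤ),
        ∑ j ∈ s.image (fun k => k + 1), |f (X j) - f (X (j-1))|
          = ∑ j ∈ s, |f (X (j+1)) - f (X j)| := by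
      intro f s
      rw [Finset.sum_image (by intro i _ j _ h; simp only at h; omega)]
      refine Finset.sum_congr rfl fun j _ => ?_
      have h : j + 1 - 1 = j := by ring
      rw [h]
    have hTVa_bdd' : ∀ s : Finset ℤ, ∑ j ∈ s, etabar * |a (X (j+1)) - a (X j)|
        ≤ etabar * (eVariationOn a Set.univ).toReal := by
      intro s
      have he : ∑ j ∈ s, etabar * |a (X (j+1)) - a (X j)|
          = ∑ j ∈ s.image (fun k => k + 1), etabar * |a (X j) - a (X (j-1))| := by
        rw [Finset.sum_image (by intro i _ j _ h; simp only at h; omega)]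
        refine Finset.sum_congr rfl fun j _ => ?_
        have h : j + 1 - 1 = j := by ring
        rw [h]
      rw [he]; exact hTVa_bdd _
    -- bounded variation of W
    have hWBV : eVariationOn W Set.univ ≠ ⊤ := by
      have h1 : eVariationOn W Set.univ
          ≤ eVariationOn uMm Set.univ + eVariationOn uMp Set.univ := by
        apply evar_le_add
        intro x y
        have h2 : |(uMm x - uMm y) + (uMp x - uMp y)|
            ≤ |uMm x - uMm y| + |uMp x - uMp y| := abs_add_le _ _
        have h3 : |W x - W y| = |(uMm x - uMm y) + (uMp x - uMp y)| / 2 := by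
          rw [show W x - W y = ((uMm x - uMm y) + (uMp x - uMp y))/2 from by
            show (uMm x + uMp x)/2 - (uMm y + uMp y)/2 = _; ring]
          rw [abs_div, abs_two]
        rw [h3]
        linarith [abs_nonneg ((uMm x - uMm y) + (uMp x - uMp y))]
      exact ne_top_of_le_ne_top (ENNReal.add_ne_top.mpr ⟨hB3m, hB3p⟩) h1
    -- estimate at the first time step
    have hperj0 : ∀ j : ℤ, |u 1 j - u 0 j| ≤
        lam * ((etabar * |a (X j) - a (X (j-1))|
              + L * (|u₀ (X j) - u₀ (X (j-1))| + |W (X j) - W (X (j-1))|))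
             + (etabar * |a (X (j+1)) - a (X j)|
              + L * (|u₀ (X (j+1)) - u₀ (X j)| + |W (X (j+1)) - W (X j)|))) := by
      intro j
      have h0' : ∀ k : ℤ, u 0 k = u₀ (X k) := h0
      have hst : u 1 j = u 0 j
          - lam * (Abar A W (u 0 j) (u 0 (j+1)) (X j) (X (j+1))
                 - Abar A W (u 0 (j-1)) (u 0 j) (X (j-1)) (X j)) := hstep' 0 j
      have h1 : u 1 j - u 0 j = -(lam *
          (Abar A W (u₀ (X j)) (u₀ (X (j+1))) (X j) (X (j+1))
          - Abar A W (u₀ (X (j-1))) (u₀ (X j)) (X (j-1)) (X j))) := by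
        rw [hst, h0' j, h0' (j+1), h0' (j-1)]; ring
      rw [h1, abs_neg, abs_mul, abs_of_pos hlam0]
      refine mul_le_mul_of_nonneg_left ?_ hlam0.le
      have hS1 : (0:ℝ) ≤ etabar * |a (X j) - a (X (j-1))|
          + L * (|u₀ (X j) - u₀ (X (j-1))| + |W (X j) - W (X (j-1))|) :=
        add_nonneg (hEta _ _) (mul_nonneg hL0 (add_nonneg (abs_nonneg _) (abs_nonneg _)))
      have hS2 : (0:ℝ) ≤ etabar * |a (X (j+1)) - a (X j)|
          + L * (|u₀ (X (j+1)) - u₀ (X j)| + |W (X (j+1)) - W (X j)|) :=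
        add_nonneg (hEta _ _) (mul_nonneg hL0 (add_nonneg (abs_nonneg _) (abs_nonneg _)))
      have hg : |A (X j) (max (u₀ (X j)) (W (X j)))
          - A (X (j-1)) (max (u₀ (X (j-1))) (W (X (j-1))))| ≤
          etabar * |a (X j) - a (X (j-1))|
            + L * (|u₀ (X j) - u₀ (X (j-1))| + |W (X j) - W (X (j-1))|) := by
        refine gdiff _ _ _ _ _ (hmaxadm _ _ (hub (X j))) (le_max_right _ _)
          (hmaxadm _ _ (hub (X (j-1)))) (le_max_right _ _) ?_ ?_
        · refine (abs_max_sub_max_le_max _ _ _ _).trans ?_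
          exact max_le (le_add_of_nonneg_right (abs_nonneg _))
            (le_add_of_nonneg_left (abs_nonneg _))
        · exact le_add_of_nonneg_left (abs_nonneg _)
      have hh : |A (X (j+1)) (min (u₀ (X (j+1))) (W (X (j+1))))
          - A (X j) (min (u₀ (X j)) (W (X j)))| ≤
          etabar * |a (X (j+1)) - a (X j)|
            + L * (|u₀ (X (j+1)) - u₀ (X j)| + |W (X (j+1)) - W (X j)|) := by
        refine hdiff _ _ _ _ _ (hminadm _ _ (hub (X (j+1)))) (min_le_right _ _)
          (hminadm _ _ (hub (X j))) (min_le_right _ _) ?_ ?_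
        · refine (abs_min_sub_min_le_max _ _ _ _).trans ?_
          exact max_le (le_add_of_nonneg_right (abs_nonneg _))
            (le_add_of_nonneg_left (abs_nonneg _))
        · exact le_add_of_nonneg_left (abs_nonneg _)
      simp only [Abar]
      refine (abs_max_sub_max_le_max _ _ _ _).trans (max_le ?_ ?_)
      · exact le_trans hg (le_add_of_nonneg_right hS2)
      · exact le_trans hh (le_add_of_nonneg_left hS1)
    have E0 : ∀ s : Finset ℤ, ∑ j ∈ s, |u 1 j - u 0 j| ≤
        2 * lam * (etabar * (eVariationOn a Set.univ).toReal
          + L * (eVariationOn u₀ Set.univ).toReal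
          + L * (eVariationOn W Set.univ).toReal) := by
      intro s
      have h1 := Finset.sum_le_sum (fun j (_ : j ∈ s) => hperj0 j)
      refine h1.trans ?_
      rw [← Finset.mul_sum]
      have hkey : ∑ j ∈ s, ((etabar * |a (X j) - a (X (j-1))|
              + L * (|u₀ (X j) - u₀ (X (j-1))| + |W (X j) - W (X (j-1))|))
             + (etabar * |a (X (j+1)) - a (X j)|
              + L * (|u₀ (X (j+1)) - u₀ (X j)| + |W (X (j+1)) - W (X j)|)))
          ≤ 2 * (etabar * (eVariationOn a Set.univ).toReal
            + L * (eVariationOn u₀ Set.univ).toReal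
            + L * (eVariationOn W Set.univ).toReal) := by
        have hA1 := hTVa_bdd s
        have hA2 := hTVa_bdd' s
        have hU1 := evar_sum_le u₀ hu₀_BV X hXmono s
        have hU2 : ∑ j ∈ s, |u₀ (X (j+1)) - u₀ (X j)|
            ≤ (eVariationOn u₀ Set.univ).toReal := by
          rw [← hshift u₀ s]; exact evar_sum_le u₀ hu₀_BV X hXmono _
        have hW1 := evar_sum_le W hWBV X hXmono s
        have hW2 : ∑ j ∈ s, |W (X (j+1)) - W (X j)|
            ≤ (eVariationOn W Set.univ).toReal := by
          rw [← hshift W s]; exact evar_sum_le W hWBV X hXmono _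
        have hU1' := mul_le_mul_of_nonneg_left hU1 hL0
        have hU2' := mul_le_mul_of_nonneg_left hU2 hL0
        have hW1' := mul_le_mul_of_nonneg_left hW1 hL0
        have hW2' := mul_le_mul_of_nonneg_left hW2 hL0
        have hsplit : ∑ j ∈ s, ((etabar * |a (X j) - a (X (j-1))|
              + L * (|u₀ (X j) - u₀ (X (j-1))| + |W (X j) - W (X (j-1))|))
             + (etabar * |a (X (j+1)) - a (X j)|
              + L * (|u₀ (X (j+1)) - u₀ (X j)| + |W (X (j+1)) - W (X j)|)))
            = (∑ j ∈ s, etabar * |a (X j) - a (X (j-1))|)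
              + (∑ j ∈ s, etabar * |a (X (j+1)) - a (X j)|)
              + (L * ∑ j ∈ s, |u₀ (X j) - u₀ (X (j-1))|)
              + (L * ∑ j ∈ s, |u₀ (X (j+1)) - u₀ (X j)|)
              + (L * ∑ j ∈ s, |W (X j) - W (X (j-1))|)
              + (L * ∑ j ∈ s, |W (X (j+1)) - W (X j)|) := by
          simp only [Finset.mul_sum, ← Finset.sum_add_distrib]
          exact Finset.sum_congr rfl fun j _ => by ring
        rw [hsplit]
        linarith
      have h2 := mul_le_mul_of_nonneg_left hkey hlam0.le
      calc lam * ∑ j ∈ s, _ ≤ lam * (2 * (etabar * (eVariationOn a Set.univ).toReal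
            + L * (eVariationOn u₀ Set.univ).toReal
            + L * (eVariationOn W Set.univ).toReal)) := h2
        _ = 2 * lam * (etabar * (eVariationOn a Set.univ).toReal
            + L * (eVariationOn u₀ Set.univ).toReal
            + L * (eVariationOn W Set.univ).toReal) := by ring
    -- L¹-contraction between consecutive time differences
    have hsplitSum : ∀ (P Q : Finset ℤ) (g : ℤ → ℝ), (∀ j, 0 ≤ g j) →
        ∑ j ∈ P, g j ≤ ∑ j ∈ P \ Q, g j + ∑ j ∈ Q, g j := by
      intro P Q g hg
      rw [← Finset.sum_union Finset.sdiff_disjoint]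
      refine Finset.sum_le_sum_of_subset_of_nonneg ?_ (fun k _ _ => hg k)
      intro k hk
      by_cases h : k ∈ Q
      · exact Finset.mem_union_right _ h
      · exact Finset.mem_union_left _ (Finset.mem_sdiff.mpr ⟨hk, h⟩)
    have hctr : ∀ (n : ℕ) (s : Finset ℤ), ∃ t : Finset ℤ,
        ∑ j ∈ s, |u (n+1+1) j - u (n+1) j| ≤ ∑ j ∈ t, |u (n+1) j - u n j| := by
      intro n s
      set e : ℤ → ℝ := fun j => u (n+1) j - u n j with he
      set At : ℤ → ℝ := fun j => Abar A W (u (n+1) j) (u n (j+1)) (X j) (X (j+1))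
          - Abar A W (u n j) (u n (j+1)) (X j) (X (j+1)) with hAt
      set Bt : ℤ → ℝ := fun j => Abar A W (u (n+1) j) (u (n+1) (j+1)) (X j) (X (j+1))
          - Abar A W (u (n+1) j) (u n (j+1)) (X j) (X (j+1)) with hBt
      have hAlip : ∀ j, |At j| ≤ L * |e j| := by
        intro j
        have hg : |A (X j) (max (u (n+1) j) (W (X j))) - A (X j) (max (u n j) (W (X j)))| ≤
            etabar * |a (X j) - a (X j)| + L * |e j| :=
          gdiff _ _ _ _ _ (hmaxadm _ _ (hPn (n+1) j)) (le_max_right _ _)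
            (hmaxadm _ _ (hPn n j)) (le_max_right _ _) (abs_max_sub_max_le_abs _ _ _)
            (by rw [sub_self, abs_zero]; exact abs_nonneg _)
        rw [sub_self, abs_zero, mul_zero, zero_add] at hg
        simp only [hAt, Abar]
        exact le_trans (abs_max_sub_max_le_abs _ _ _) hg
      have hAsgn : ∀ j, 0 ≤ At j * e j := by
        intro j
        rcases le_total (u n j) (u (n+1) j) with h | h
        · have h1 : A (X j) (max (u n j) (W (X j))) ≤ A (X j) (max (u (n+1) j) (W (X j))) :=
            hgm _ _ _ (le_max_right _ _) (max_le_max h le_rfl)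
          have h2 : (0:ℝ) ≤ At j := by
            simp only [hAt, Abar, sub_nonneg]
            exact max_le_max h1 le_rfl
          have h3 : (0:ℝ) ≤ e j := by simp only [he]; linarith
          exact mul_nonneg h2 h3
        · have h1 : A (X j) (max (u (n+1) j) (W (X j))) ≤ A (X j) (max (u n j) (W (X j))) :=
            hgm _ _ _ (le_max_right _ _) (max_le_max h le_rfl)
          have h2 : At j ≤ 0 := by
            simp only [hAt, Abar, sub_nonpos]
            exact max_le_max h1 le_rfl
          have h3 : e j ≤ 0 := by simp only [he]; linarith
          nlinarith
      have hBlip : ∀ j, |Bt j| ≤ L * |e (j+1)| := by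
        intro j
        have hg : |A (X (j+1)) (min (u (n+1) (j+1)) (W (X (j+1))))
            - A (X (j+1)) (min (u n (j+1)) (W (X (j+1))))| ≤
            etabar * |a (X (j+1)) - a (X (j+1))| + L * |e (j+1)| :=
          hdiff _ _ _ _ _ (hminadm _ _ (hPn (n+1) (j+1))) (min_le_right _ _)
            (hminadm _ _ (hPn n (j+1))) (min_le_right _ _)
            ((abs_min_sub_min_le_max _ _ _ _).trans
              (by rw [sub_self, abs_zero]; exact max_le le_rfl (abs_nonneg _)))
            (by rw [sub_self, abs_zero]; exact abs_nonneg _)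
        rw [sub_self, abs_zero, mul_zero, zero_add] at hg
        simp only [hBt, Abar]
        refine (abs_max_sub_max_le_max _ _ _ _).trans ?_
        rw [sub_self, abs_zero]
        exact max_le (mul_nonneg hL0 (abs_nonneg _)) hg
      have hBsgn : ∀ j, Bt j * e (j+1) ≤ 0 := by
        intro j
        rcases le_total (u n (j+1)) (u (n+1) (j+1)) with h | h
        · have h1 : A (X (j+1)) (min (u (n+1) (j+1)) (W (X (j+1))))
              ≤ A (X (j+1)) (min (u n (j+1)) (W (X (j+1)))) :=
            hha _ _ _ (min_le_right _ _) (min_le_min h le_rfl)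
          have h2 : Bt j ≤ 0 := by
            simp only [hBt, Abar, sub_nonpos]
            exact max_le_max le_rfl h1
          have h3 : (0:ℝ) ≤ e (j+1) := by simp only [he]; linarith
          exact mul_nonpos_iff.mpr (Or.inr ⟨h2, h3⟩)
        · have h1 : A (X (j+1)) (min (u n (j+1)) (W (X (j+1))))
              ≤ A (X (j+1)) (min (u (n+1) (j+1)) (W (X (j+1)))) :=
            hha _ _ _ (min_le_right _ _) (min_le_min h le_rfl)
          have h2 : (0:ℝ) ≤ Bt j := by
            simp only [hBt, Abar, sub_nonneg]
            exact max_le_max le_rfl h1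
          have h3 : e (j+1) ≤ 0 := by simp only [he]; linarith
          exact mul_nonpos_iff.mpr (Or.inl ⟨h2, h3⟩)
      have hde : ∀ j : ℤ, u (n+1+1) j - u (n+1) j
          = e j - lam * (At j + Bt j) + lam * (At (j-1) + Bt (j-1)) := by
        intro j
        have h1 := hstep' (n+1) j
        have h2 := hstep' n j
        have hj : j - 1 + 1 = j := by ring
        simp only [hAt, hBt, he, hj]
        rw [h1, h2]
        ring
      have hperj : ∀ j : ℤ, |u (n+1+1) j - u (n+1) j|
          ≤ |e j| - lam * |At j| - lam * |Bt (j-1)| + lam * |At (j-1)| + lam * |Bt j| := by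
        intro j
        have hj : j - 1 + 1 = j := by ring
        have hB' : |Bt (j-1)| ≤ L * |e j| := by have h := hBlip (j-1); rwa [hj] at h
        have hBs' : Bt (j-1) * e j ≤ 0 := by have h := hBsgn (j-1); rwa [hj] at h
        have h2 := absstep hlam0.le hCFL (hAlip j) hB' (hAsgn j) hBs'
        have h4 : |lam * At (j-1) - lam * Bt j| ≤ lam * |At (j-1)| + lam * |Bt j| := by
          rw [sub_eq_add_neg]
          refine (abs_add_le _ _).trans ?_
          rw [abs_neg, abs_mul, abs_mul, abs_of_pos hlam0]
        calc |u (n+1+1) j - u (n+1) j|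
            = |(e j - lam * At j + lam * Bt (j-1)) + (lam * At (j-1) - lam * Bt j)| := by
              rw [hde j]; congr 1; ring
          _ ≤ |e j - lam * At j + lam * Bt (j-1)| + |lam * At (j-1) - lam * Bt j| :=
              abs_add_le _ _
          _ ≤ (|e j| - lam * |At j| - lam * |Bt (j-1)|) + (lam * |At (j-1)| + lam * |Bt j|) :=
              add_le_add h2 h4
          _ = |e j| - lam * |At j| - lam * |Bt (j-1)| + lam * |At (j-1)| + lam * |Bt j| := by
              ring
      set T := s.image (fun k => k - 1) with hT
      set U := (s \ T).image (fun k => k + 1) with hU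
      set V := (T \ s) ∪ U with hV
      refine ⟨s ∪ V, ?_⟩
      have hsum1 : ∑ j ∈ s, |u (n+1+1) j - u (n+1) j|
          ≤ ∑ j ∈ s, (|e j| - lam * |At j| - lam * |Bt (j-1)| + lam * |At (j-1)| + lam * |Bt j|) :=
        Finset.sum_le_sum (fun j _ => hperj j)
      have hexp : ∑ j ∈ s, (|e j| - lam * |At j| - lam * |Bt (j-1)| + lam * |At (j-1)| + lam * |Bt j|)
          = ∑ j ∈ s, |e j| - lam * ∑ j ∈ s, |At j| - lam * ∑ j ∈ s, |Bt (j-1)|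
            + lam * ∑ j ∈ s, |At (j-1)| + lam * ∑ j ∈ s, |Bt j| := by
        simp only [Finset.sum_add_distrib, Finset.sum_sub_distrib, Finset.mul_sum]
      have hshA : ∑ j ∈ s, |At (j-1)| = ∑ j ∈ T, |At j| := by
        rw [hT, Finset.sum_image (by intro i _ j _ h; simp only at h; omega)]
      have hshB : ∑ j ∈ s, |Bt (j-1)| = ∑ j ∈ T, |Bt j| := by
        rw [hT, Finset.sum_image (by intro i _ j _ h; simp only at h; omega)]
      have hTsplit : ∑ j ∈ T, |At j| ≤ ∑ j ∈ T \ s, |At j| + ∑ j ∈ s, |At j| :=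
        hsplitSum T s _ (fun j => abs_nonneg _)
      have hBsplit : ∑ j ∈ s, |Bt j| ≤ ∑ j ∈ s \ T, |Bt j| + ∑ j ∈ T, |Bt j| :=
        hsplitSum s T _ (fun j => abs_nonneg _)
      have hbd1 : ∑ j ∈ T \ s, |At j| ≤ L * ∑ j ∈ T \ s, |e j| := by
        rw [Finset.mul_sum]; exact Finset.sum_le_sum (fun j _ => hAlip j)
      have hbd2 : ∑ j ∈ s \ T, |Bt j| ≤ L * ∑ j ∈ U, |e j| := by
        have h5 : ∑ j ∈ U, |e j| = ∑ j ∈ s \ T, |e (j+1)| := by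
          rw [hU, Finset.sum_image (by intro i _ j _ h; simp only at h; omega)]
        rw [h5, Finset.mul_sum]
        exact Finset.sum_le_sum (fun j _ => hBlip j)
      have hsub1 : T \ s ⊆ V := Finset.subset_union_left
      have hsub2 : U ⊆ V := Finset.subset_union_right
      have henn : ∀ (P : Finset ℤ), ∑ j ∈ P, |e j| ≤ ∑ j ∈ V, |e j| → L * ∑ j ∈ P, |e j| ≤ L * ∑ j ∈ V, |e j| :=
        fun P h => mul_le_mul_of_nonneg_left h hL0
      have hm1 : ∑ j ∈ T \ s, |e j| ≤ ∑ j ∈ V, |e j| :=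
        Finset.sum_le_sum_of_subset_of_nonneg hsub1 (fun _ _ _ => abs_nonneg _)
      have hm2 : ∑ j ∈ U, |e j| ≤ ∑ j ∈ V, |e j| :=
        Finset.sum_le_sum_of_subset_of_nonneg hsub2 (fun _ _ _ => abs_nonneg _)
      have hVnn : (0:ℝ) ≤ ∑ j ∈ V, |e j| := Finset.sum_nonneg (fun _ _ => abs_nonneg _)
      have hdisj : Disjoint s V := by
        rw [hV, Finset.disjoint_union_right]
        constructor
        · exact Finset.sdiff_disjoint.symm
        · rw [Finset.disjoint_right]
          intro k hk
          rw [hU, Finset.mem_image] at hk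
          obtain ⟨j, hj, rfl⟩ := hk
          rw [Finset.mem_sdiff] at hj
          intro hks
          refine hj.2 ?_
          rw [hT, Finset.mem_image]
          exact ⟨j + 1, hks, by ring⟩
      have hfin : ∑ j ∈ s ∪ V, |e j| = ∑ j ∈ s, |e j| + ∑ j ∈ V, |e j| :=
        Finset.sum_union hdisj
      -- put everything together
      have hAnn : (0:ℝ) ≤ ∑ j ∈ s, |At j| := Finset.sum_nonneg (fun _ _ => abs_nonneg _)
      have hBnnT : (0:ℝ) ≤ ∑ j ∈ T, |Bt j| := Finset.sum_nonneg (fun _ _ => abs_nonneg _)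
      have hq1 := mul_le_mul_of_nonneg_left hTsplit hlam0.le
      have hq2 := mul_le_mul_of_nonneg_left hBsplit hlam0.le
      have hq3 := mul_le_mul_of_nonneg_left hbd1 hlam0.le
      have hq4 := mul_le_mul_of_nonneg_left hbd2 hlam0.le
      have hLV : lam * (L * ∑ j ∈ T \ s, |e j|) + lam * (L * ∑ j ∈ U, |e j|)
          ≤ ∑ j ∈ V, |e j| := by
        have hr1 := mul_le_mul_of_nonneg_left (henn _ hm1) hlam0.le
        have hr2 := mul_le_mul_of_nonneg_left (henn _ hm2) hlam0.le
        have h10 : lam * (L * ∑ j ∈ V, |e j|) = lam * L * ∑ j ∈ V, |e j| := by ring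
        have h11 : lam * L * ∑ j ∈ V, |e j| ≤ 1/2 * ∑ j ∈ V, |e j| :=
          mul_le_mul_of_nonneg_right hCFL hVnn
        linarith only [hr1, hr2, h10, h11, hVnn]
      calc ∑ j ∈ s, |u (n+1+1) j - u (n+1) j|
          ≤ ∑ j ∈ s, (|e j| - lam * |At j| - lam * |Bt (j-1)| + lam * |At (j-1)| + lam * |Bt j|) := hsum1
        _ = ∑ j ∈ s, |e j| - lam * ∑ j ∈ s, |At j| - lam * ∑ j ∈ T, |Bt j|
            + lam * ∑ j ∈ T, |At j| + lam * ∑ j ∈ s, |Bt j| := by rw [hexp, hshA, hshB]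
        _ ≤ ∑ j ∈ s, |e j| + lam * (L * ∑ j ∈ T \ s, |e j|) + lam * (L * ∑ j ∈ U, |e j|) := by
            linarith
        _ ≤ ∑ j ∈ s, |e j| + ∑ j ∈ V, |e j| := by linarith
        _ = ∑ j ∈ s ∪ V, |e j| := hfin.symm
    -- conclude by induction on n
    intro n
    induction n with
    | zero => exact E0
    | succ n ih =>
      intro s
      obtain ⟨t, ht⟩ := hctr n s
      exact le_trans ht (ih t)
  · -- degenerate case ℳ = 0
    have hMz : ℳ = 0 := le_antisymm (not_lt.mp hMpos) hM0
    have hz : ∀ x, uMm x = 0 ∧ uMp x = 0 ∧ km x = 0 ∧ kp x = 0 := by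
      intro x
      have hc := hch x
      rw [hMz] at hc
      have hcW := hc.2.2.1
      have hcW2 := hc.2.2.2.1
      refine ⟨by linarith [hc.1, hc.2.1, hc.2.2.2.2.1, hc.2.2.2.2.2],
        by linarith [hc.1, hc.2.1, hc.2.2.2.2.1, hc.2.2.2.2.2],
        by linarith [hc.1, hc.2.1, hc.2.2.2.2.1, hc.2.2.2.2.2],
        by linarith [hc.1, hc.2.1, hc.2.2.2.2.1, hc.2.2.2.2.2]⟩
    have hW0 : ∀ x, W x = 0 := by
      intro x
      show (uMm x + uMp x)/2 = 0
      rw [(hz x).1, (hz x).2.1]; ring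
    have habz : abar = 0 := by
      have h1 := (hkp 0).1
      rw [(hz 0).2.2.2] at h1
      rw [← h1]
      exact (hA3_zero 0 0 ⟨(hz 0).1.le, (hz 0).2.1.ge⟩).symm ▸ rfl
    have hu₀z : ∀ x, u₀ x = 0 := by
      intro x
      have h1 : A x (u₀ x) ≤ 0 := habz ▸ hub x
      by_contra hne
      rcases lt_or_gt_of_ne hne with h | h
      · have h2 := hA4m x (u₀ x) (by rw [(hz x).1]; exact h.le)
        rw [(hz x).1] at h2
        have h3 : 0 < γ (0 - u₀ x) := by
          have h4 := hγ_mono (Set.mem_Ici.mpr (le_refl (0:ℝ)))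
            (Set.mem_Ici.mpr (by linarith : (0:ℝ) ≤ 0 - u₀ x))
            (by linarith : (0:ℝ) < 0 - u₀ x)
          linarith [hγ_zero]
        linarith
      · have h2 := hA4p x (u₀ x) (by rw [(hz x).2.1]; exact h.le)
        rw [(hz x).2.1] at h2
        have h3 : 0 < γ (u₀ x - 0) := by
          have h4 := hγ_mono (Set.mem_Ici.mpr (le_refl (0:ℝ)))
            (Set.mem_Ici.mpr (by linarith : (0:ℝ) ≤ u₀ x - 0))
            (by linarith : (0:ℝ) < u₀ x - 0)
          linarith [hγ_zero]
        linarith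
    have hA00 : ∀ x : ℝ, A x 0 = 0 := fun x => hA3_zero x 0 ⟨(hz x).1.le, (hz x).2.1.ge⟩
    have huz : ∀ n j, u n j = 0 := by
      intro n
      induction n with
      | zero => intro j; rw [h0 j, hu₀z]
      | succ n ih =>
        intro j
        have hab : ∀ (x y : ℝ), Abar A W 0 0 x y = 0 := by
          intro x y
          simp only [Abar]
          rw [hW0 x, hW0 y, max_self, min_self, hA00 x, hA00 y, max_self]
        rw [hstep' n j, ih j, ih (j+1), ih (j-1), hab, hab]
        simp
    intro n s
    have hLHS : ∑ j ∈ s, |u (n+1) j - u n j| = 0 :=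
      Finset.sum_eq_zero fun j _ => by rw [huz (n+1) j, huz n j]; simp
    rw [hLHS]
    have hTVu : eVariationOn u₀ Set.univ = 0 :=
      eVariationOn.constant_on
        (by rintro _ ⟨x, _, rfl⟩ _ ⟨y, _, rfl⟩; rw [hu₀z x, hu₀z y])
    have hTVW : eVariationOn W Set.univ = 0 :=
      eVariationOn.constant_on
        (by rintro _ ⟨x, _, rfl⟩ _ ⟨y, _, rfl⟩; rw [hW0 x, hW0 y])
    have hEta2 : 0 ≤ etabar * (eVariationOn a Set.univ).toReal := by
      rcases le_or_gt 0 etabar with h | h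
      · positivity
      · have hη0 : η 0 ≤ etabar := hetabar 0 (by simp [hMz])
        have hTVa : eVariationOn a Set.univ = 0 := by
          refine eVariationOn.constant_on ?_
          rintro _ ⟨x, _, rfl⟩ _ ⟨y, _, rfl⟩
          by_contra hne
          have h1 := hB2 x y 0
          have h3 : 0 < |a x - a y| := abs_pos.mpr (sub_ne_zero.mpr hne)
          nlinarith [le_trans (abs_nonneg (A x 0 - A y 0)) h1]
        rw [hTVa]; simp
    rw [hTVu, hTVW]
    simp only [ENNReal.toReal_zero, mul_zero, add_zero]
    nlinarith [hEta2, hlam0]
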